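/- Let X be a Banach space with a countable separating family of bounded linear functionals (g_n), and let T : X → X be a bounded linear operator. Let (A_i)_{i∈I} be an uncountable family of infinite subsets of ℕ with pairwise finite intersections, and J : ℓ^∞ → X a bounded linear map such that J(w) ∈ ker T whenever w ∈ ℓ^∞ has finite support. If for every i ∈ I there exists u_i ∈ ℓ^∞(A_i) with ‖u_i‖ ≤ 1 and T(Ju_i) ≠ 0, then one obtains a contradiction; hence there exists i ∈ I with J(ℓ^∞(A_i)) ⊆ ker T. -/

import Mathlib

open scoped BigOperators

set_option maxHeartbeats 1000000 in
set_option synthInstance.maxHeartbeats 400000 in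
/-- Whitley's counting lemma, abstract form: given a countable separating family of
functionals on `X`, an uncountable almost-disjoint family `(A i)` of infinite subsets of `ℕ`,
and a bounded map `J : ℓ^∞ → X` sending finitely supported sequences into `ker T`,
some `ℓ^∞(A i)` is mapped into `ker T` by `J`. -/
theorem whitley_counting_lemma
    (X : Type*) [NormedAddCommGroup X] [NormedSpace ℝ X]
    (g : ℕ → (X →L[ℝ] ℝ))
    (hsep : ∀ f : X, (∀ n, g n f = 0) → f = 0)
    (T : X →L[ℝ] X)
    (I : Type*) (hI : ¬ Countable I)
    (A : I → Set ℕ)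
    (hinf : ∀ i, (A i).Infinite)
    (had : ∀ i j, i ≠ j → (A i ∩ A j).Finite)
    (J : lp (fun _ : ℕ => ℝ) ⊤ →L[ℝ] X)
    (hfin : ∀ w : lp (fun _ : ℕ => ℝ) ⊤,
      (Function.support fun n => w n).Finite → T (J w) = 0) :
    ∃ i : I, ∀ u : lp (fun _ : ℕ => ℝ) ⊤, (∀ n ∉ A i, u n = 0) → T (J u) = 0 := by
  classical
  by_contra hcon
  push_neg at hcon
  choose u hu hTu using hcon
  have hune : ∀ i, u i ≠ 0 := fun i h => hTu i (by rw [h]; simp)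
  set v : I → lp (fun _ : ℕ => ℝ) ⊤ := fun i => ‖u i‖⁻¹ • u i with hv
  have hvn : ∀ i, ‖v i‖ ≤ 1 := by
    intro i
    rw [hv]
    simp only [norm_smul, norm_inv, norm_norm]
    rw [inv_mul_cancel₀ (norm_ne_zero_iff.mpr (hune i))]
  have hvsupp : ∀ i, ∀ n ∉ A i, v i n = 0 := by
    intro i n hn
    have : v i n = ‖u i‖⁻¹ * u i n := by
      rw [hv]; simp [lp.coeFn_smul]
    rw [this, hu i n hn, mul_zero]
  have hTv : ∀ i, T (J (v i)) ≠ 0 := by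
    intro i
    rw [hv]
    simp only [map_smul]
    exact smul_ne_zero (inv_ne_zero (norm_ne_zero_iff.mpr (hune i))) (hTu i)
  have hex : ∀ i, ∃ q : ℕ × ℕ, 1 / ((q.2 : ℝ) + 1) ≤ |g q.1 (T (J (v i)))| := by
    intro i
    have hn : ∃ n, g n (T (J (v i))) ≠ 0 := by
      by_contra h; push_neg at h; exact hTv i (hsep _ h)
    obtain ⟨n, hn⟩ := hn
    obtain ⟨k, hk⟩ := exists_nat_one_div_lt (abs_pos.mpr hn)
    exact ⟨(n, k), le_of_lt hk⟩
  choose p hp using hex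
  have hfib : ∃ q : ℕ × ℕ, (p ⁻¹' {q}).Infinite := by
    by_contra h; push_neg at h
    apply hI
    have hcnt : ∀ q, (p ⁻¹' {q}).Countable :=
      fun q => (h q).countable
    have huniv : (Set.univ : Set I).Countable := by
      have hU : (⋃ q : ℕ × ℕ, p ⁻¹' {q}) = Set.univ := by
        ext i; simp
      rw [← hU]
      exact Set.countable_iUnion hcnt
    exact Set.countable_univ_iff.mp huniv
  obtain ⟨⟨n0, k0⟩, hfib⟩ := hfib
  set C : ℝ := ‖g n0‖ * ‖T‖ * ‖J‖ with hC
  have hC0 : (0:ℝ) ≤ C := by positivity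
  obtain ⟨N, hN⟩ := exists_nat_gt (((k0 : ℝ) + 1) * C)
  obtain ⟨F, hFsub, hFcard⟩ := hfib.exists_subset_card_eq N
  set sgn : I → ℝ := fun i => if 0 ≤ g n0 (T (J (v i))) then 1 else -1 with hsgn
  set y : lp (fun _ : ℕ => ℝ) ⊤ := ∑ i ∈ F, sgn i • v i with hy
  have hterm : ∀ i ∈ F, sgn i * g n0 (T (J (v i))) = |g n0 (T (J (v i)))| := by
    intro i _
    rw [hsgn]
    by_cases h : 0 ≤ g n0 (T (J (v i)))
    · simp [h, abs_of_nonneg h]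
    · simp only [h, if_false]
      rw [abs_of_neg (lt_of_not_ge h)]; ring
  have hlow : (N : ℝ) / ((k0 : ℝ) + 1) ≤ g n0 (T (J y)) := by
    have hsum : g n0 (T (J y)) = ∑ i ∈ F, sgn i * g n0 (T (J (v i))) := by
      rw [hy, map_sum, map_sum, map_sum]
      refine Finset.sum_congr rfl fun i _ => ?_
      rw [map_smul, map_smul, map_smul, smul_eq_mul]
    rw [hsum]
    have : ∀ i ∈ F, 1 / ((k0 : ℝ) + 1) ≤ sgn i * g n0 (T (J (v i))) := by
      intro i hi
      have hpi : p i = (n0, k0) := hFsub hi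
      have := hp i
      rw [hpi] at this
      rw [hterm i hi]
      exact this
    calc (N : ℝ) / ((k0 : ℝ) + 1) = ∑ _i ∈ F, 1 / ((k0 : ℝ) + 1) := by
          rw [Finset.sum_const, hFcard, nsmul_eq_mul]; ring
      _ ≤ ∑ i ∈ F, sgn i * g n0 (T (J (v i))) := Finset.sum_le_sum this
  set S : Set ℕ := ⋃ q ∈ F.offDiag, (A q.1 ∩ A q.2) with hS
  have hSfin : S.Finite := by
    rw [hS]
    refine Set.Finite.biUnion F.offDiag.finite_toSet fun q hq => ?_
    rw [Finset.mem_coe, Finset.mem_offDiag] at hq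
    exact had _ _ hq.2.2
  set bf : ℕ → ℝ := fun n => if n ∈ S then (y n : ℝ) else 0 with hbf
  have hbmem : Memℓp bf ⊤ := by
    apply memℓp_infty
    refine ⟨‖y‖, ?_⟩
    rintro r ⟨n, rfl⟩
    rw [hbf]
    by_cases h : n ∈ S
    · simp only [h, if_true]
      exact lp.norm_apply_le_norm ENNReal.top_ne_zero y n
    · simp [h]
  set b : lp (fun _ : ℕ => ℝ) ⊤ := ⟨bf, hbmem⟩ with hb
  have hbapp : ∀ n, b n = bf n := fun n => rfl
  have hTb : T (J b) = 0 := by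
    apply hfin
    apply hSfin.subset
    intro n hn
    rw [Function.mem_support, hbapp, hbf] at hn
    by_contra hnS
    simp [hnS] at hn
  set a : lp (fun _ : ℕ => ℝ) ⊤ := y - b with ha
  have haapp : ∀ n, a n = y n - bf n := by
    intro n
    rw [ha, lp.coeFn_sub, Pi.sub_apply, hbapp]
  have hyapp : ∀ n, y n = ∑ i ∈ F, sgn i * v i n := by
    intro n
    rw [hy, lp.coeFn_sum, Finset.sum_apply]
    refine Finset.sum_congr rfl fun i _ => ?_
    rw [lp.coeFn_smul, Pi.smul_apply, smul_eq_mul]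
  have han : ∀ n, |(a n : ℝ)| ≤ 1 := by
    intro n
    by_cases hnS : n ∈ S
    · rw [haapp, hbf]
      simp [hnS]
    · have hyn : a n = ∑ i ∈ F, sgn i * v i n := by
        rw [haapp, hbf]
        simp only [hnS, if_false, sub_zero]
        exact hyapp n
      by_cases hexi : ∃ i ∈ F, n ∈ A i
      · obtain ⟨i0, hi0F, hi0⟩ := hexi
        have hone : ∑ i ∈ F, sgn i * v i n = sgn i0 * v i0 n := by
          refine Finset.sum_eq_single_of_mem i0 hi0F fun j hjF hji => ?_
          have hnj : n ∉ A j := by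
            intro hnj
            apply hnS
            rw [hS]
            exact Set.mem_biUnion (x := ((j, i0) : I × I))
              (Finset.mem_coe.mpr (Finset.mem_offDiag.mpr ⟨hjF, hi0F, hji⟩)) ⟨hnj, hi0⟩
          rw [hvsupp j n hnj, mul_zero]
        rw [hyn, hone]
        have h1 : |sgn i0| = 1 := by
          by_cases h : 0 ≤ g n0 (T (J (v i0))) <;> simp [hsgn, h]
        rw [abs_mul, h1, one_mul]
        have := lp.norm_apply_le_norm ENNReal.top_ne_zero (v i0) n
        rw [Real.norm_eq_abs] at this
        exact this.trans (hvn i0)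
      · push_neg at hexi
        have hz : ∑ i ∈ F, sgn i * v i n = 0 :=
          Finset.sum_eq_zero fun i hi => by rw [hvsupp i n (hexi i hi), mul_zero]
        rw [hyn, hz]
        norm_num
  have hanorm : ‖a‖ ≤ 1 :=
    lp.norm_le_of_forall_le zero_le_one fun n => by
      rw [Real.norm_eq_abs]; exact han n
  have hup : |g n0 (T (J a))| ≤ C := by
    have h1 : |g n0 (T (J a))| ≤ ‖g n0‖ * ‖T (J a)‖ := (g n0).le_opNorm _
    have h2 : ‖T (J a)‖ ≤ ‖T‖ * ‖J a‖ := T.le_opNorm _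
    have h3 : ‖J a‖ ≤ ‖J‖ * ‖a‖ := J.le_opNorm _
    have h4 : ‖J‖ * ‖a‖ ≤ ‖J‖ * 1 := by
      exact mul_le_mul_of_nonneg_left hanorm (norm_nonneg _)
    calc |g n0 (T (J a))| ≤ ‖g n0‖ * ‖T (J a)‖ := h1
      _ ≤ ‖g n0‖ * (‖T‖ * ‖J a‖) := by
          exact mul_le_mul_of_nonneg_left h2 (norm_nonneg _)
      _ ≤ ‖g n0‖ * (‖T‖ * (‖J‖ * 1)) := by
          have := h3.trans h4
          exact mul_le_mul_of_nonneg_left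
            (mul_le_mul_of_nonneg_left this (norm_nonneg _)) (norm_nonneg _)
      _ = C := by rw [hC]; ring
  have hya : T (J y) = T (J a) := by
    have hyab : y = a + b := by rw [ha, sub_add_cancel]
    rw [hyab, map_add, map_add, hTb, add_zero]
  have hfinal : (N : ℝ) / ((k0 : ℝ) + 1) ≤ C :=
    hlow.trans ((le_abs_self _).trans (by rw [hya]; exact hup))
  have hk0 : (0:ℝ) < (k0 : ℝ) + 1 := by positivity
  rw [div_le_iff₀ hk0] at hfinal
  nlinarith
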